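/- There exists a maximal eventually different family 𝒜 ⊆ ω^ω which is not s-measurable, not m-measurable and not l-measurable, and which contains a dominating subfamily 𝒟 ⊆ 𝒜 of cardinality at most 𝔡. -/

import Mathlib

open Cardinal Set

/-- A tree on ω: a nonempty set of finite sequences closed under initial segments. -/
def IsTree (T : Set (List ℕ)) : Prop :=
  T.Nonempty ∧ ∀ s ∈ T, ∀ n : ℕ, s.take n ∈ T

/-- The body of a tree: all infinite branches. -/
def treeBody (T : Set (List ℕ)) : Set (ℕ → ℕ) :=
  {x | ∀ n : ℕ, (List.ofFn fun i : Fin n => x i) ∈ T}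

/-- Immediate successors of a node in a tree. -/
def succs (T : Set (List ℕ)) (t : List ℕ) : Set ℕ := {n | t ++ [n] ∈ T}

/-- Sacks (perfect) tree: every node has an extension with at least two immediate successors. -/
def IsSacksTree (T : Set (List ℕ)) : Prop :=
  IsTree T ∧ ∀ s ∈ T, ∃ t ∈ T, s <+: t ∧ (succs T t).Nontrivial

/-- Miller tree: every node has an extension with infinitely many immediate successors. -/
def IsMillerTree (T : Set (List ℕ)) : Prop :=
  IsTree T ∧ ∀ s ∈ T, ∃ t ∈ T, s <+: t ∧ (succs T t).Infinite

/-- Laver tree: has a stem (a node comparable with every node) such that every node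
extending the stem has infinitely many immediate successors. -/
def IsLaverTree (T : Set (List ℕ)) : Prop :=
  IsTree T ∧ ∃ s ∈ T, (∀ t ∈ T, s <+: t ∨ t <+: s) ∧
    ∀ t ∈ T, s <+: t → (succs T t).Infinite

/-- Complete Laver tree: every node has infinitely many immediate successors. -/
def IsCompleteLaverTree (T : Set (List ℕ)) : Prop :=
  IsTree T ∧ ∀ t ∈ T, (succs T t).Infinite

/-- The tree ideal t₀ associated with a family of trees 𝕋. -/
def treeIdeal (𝕋 : Set (Set (List ℕ))) : Set (Set (ℕ → ℕ)) :=
  {A | ∀ P ∈ 𝕋, ∃ Q ∈ 𝕋, Q ⊆ P ∧ treeBody Q ∩ A = ∅}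

/-- t-measurability with respect to a family of trees 𝕋. -/
def TMeasurable (𝕋 : Set (Set (List ℕ))) (A : Set (ℕ → ℕ)) : Prop :=
  ∀ P ∈ 𝕋, ∃ Q ∈ 𝕋, Q ⊆ P ∧ (treeBody Q ⊆ A ∨ treeBody Q ∩ A = ∅)

/-- 𝕋-Bernstein set: meets and omits the body of every tree in 𝕋. -/
def TBernstein (𝕋 : Set (Set (List ℕ))) (B : Set (ℕ → ℕ)) : Prop :=
  ∀ T ∈ 𝕋, (B ∩ treeBody T).Nonempty ∧ (B \ treeBody T).Nonempty

/-- Eventually different family. -/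
def EDFamily (A : Set (ℕ → ℕ)) : Prop :=
  ∀ f ∈ A, ∀ g ∈ A, f ≠ g → {n : ℕ | f n = g n}.Finite

/-- Maximal eventually different family. -/
def MEDFamily (A : Set (ℕ → ℕ)) : Prop :=
  EDFamily A ∧ ∀ B : Set (ℕ → ℕ), A ⊂ B → ¬ EDFamily B

/-- Dominating family. -/
def IsDominating (D : Set (ℕ → ℕ)) : Prop :=
  ∀ x : ℕ → ℕ, ∃ d ∈ D, ∀ᶠ n in Filter.atTop, x n < d n

/-- The dominating number 𝔡. -/
noncomputable def domNumber : Cardinal :=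
  sInf {c : Cardinal | ∃ D : Set (ℕ → ℕ), IsDominating D ∧ Cardinal.mk ↑D = c}

namespace S19aux

open Classical

noncomputable section

/-! ### Transversal lemma -/

lemma transversal {X ι : Type} (A : ι → Set X)
    (h : ∀ i, Cardinal.mk ι ≤ Cardinal.mk (A i)) :
    ∃ F : ι → X, Function.Injective F ∧ ∀ i, F i ∈ A i := by
  obtain ⟨r, wo, hord⟩ := Cardinal.ord_eq ι
  have hseg : ∀ i : ι, #{j // r j i} < #ι := by
    intro i
    rw [← Ordinal.card_typein]
    exact Cardinal.lt_ord.mp (hord ▸ Ordinal.typein_lt_type r i)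
  have key : ∀ (i : ι) (IH : ∀ j, r j i → X),
      ((A i) \ (Set.range fun p : {j // r j i} => IH p.1 p.2)).Nonempty := by
    intro i IH
    rw [Set.diff_nonempty]
    intro hsub
    have : #(A i) ≤ #{j // r j i} :=
      le_trans (Cardinal.mk_le_mk_of_subset hsub) Cardinal.mk_range_le
    exact absurd (lt_of_le_of_lt (le_trans (h i) this) (hseg i)) (lt_irrefl _)
  let F : ι → X := wo.wf.fix (fun i IH => (key i IH).choose)
  have hF : ∀ i, F i = (key i (fun j _ => F j)).choose := fun i => wo.wf.fix_eq _ i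
  have hFA : ∀ i, F i ∈ A i ∧ F i ∉ Set.range fun p : {j // r j i} => F p.1 := by
    intro i
    have := (key i (fun j _ => F j)).choose_spec
    rw [← hF i] at this
    exact this
  refine ⟨F, ?_, fun i => (hFA i).1⟩
  intro i j hij
  by_contra hne
  rcases trichotomous_of r i j with hr | he | hr
  · exact (hFA j).2 ⟨⟨i, hr⟩, hij⟩
  · exact hne he
  · exact (hFA i).2 ⟨⟨j, hr⟩, hij.symm⟩

/-! ### Cardinality of the body of a Sacks tree -/

variable {Q : Set (List ℕ)}

lemma nil_mem (hQ : IsSacksTree Q) : [] ∈ Q := by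
  obtain ⟨s, hs⟩ := hQ.1.1
  have := hQ.1.2 s hs 0
  simpa using this

lemma child_ex (hQ : IsSacksTree Q) (t : List ℕ) (ht : t ∈ Q) :
    ∃ u a b, t <+: u ∧ a ≠ b ∧ u ++ [a] ∈ Q ∧ u ++ [b] ∈ Q := by
  obtain ⟨u, hu, htu, a, ha, b, hb, hab⟩ := hQ.2 t ht
  exact ⟨u, a, b, htu, hab, ha, hb⟩

def nodeOf (hQ : IsSacksTree Q) (t : {l // l ∈ Q}) : List ℕ :=
  (child_ex hQ t.1 t.2).choose
def valOf (hQ : IsSacksTree Q) (t : {l // l ∈ Q}) (bb : Bool) : ℕ :=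
  if bb then (child_ex hQ t.1 t.2).choose_spec.choose
  else (child_ex hQ t.1 t.2).choose_spec.choose_spec.choose

lemma nodeOf_spec (hQ : IsSacksTree Q) (t : {l // l ∈ Q}) :
    t.1 <+: nodeOf hQ t ∧ valOf hQ t true ≠ valOf hQ t false ∧
      ∀ bb, nodeOf hQ t ++ [valOf hQ t bb] ∈ Q := by
  obtain ⟨h1, h2, h3, h4⟩ := (child_ex hQ t.1 t.2).choose_spec.choose_spec.choose_spec
  exact ⟨h1, by simpa [valOf] using h2,
    by intro bb; cases bb <;> simp only [valOf, if_true, if_false, Bool.false_eq_true, nodeOf] <;> [exact h4; exact h3]⟩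

def child (hQ : IsSacksTree Q) (t : {l // l ∈ Q}) (bb : Bool) : {l // l ∈ Q} :=
  ⟨nodeOf hQ t ++ [valOf hQ t bb], (nodeOf_spec hQ t).2.2 bb⟩

def sigma' (hQ : IsSacksTree Q) (x : ℕ → Bool) : ℕ → {l // l ∈ Q}
  | 0 => ⟨[], nil_mem hQ⟩
  | n+1 => child hQ (sigma' hQ x n) (x n)

lemma sigma'_prefix (hQ : IsSacksTree Q) (x : ℕ → Bool) (n : ℕ) :
    (sigma' hQ x n).1 <+: (sigma' hQ x (n+1)).1 := by
  have h := (nodeOf_spec hQ (sigma' hQ x n)).1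
  exact h.trans (List.prefix_append _ _)

lemma sigma'_len (hQ : IsSacksTree Q) (x : ℕ → Bool) (n : ℕ) :
    (sigma' hQ x n).1.length < (sigma' hQ x (n+1)).1.length := by
  have h := (nodeOf_spec hQ (sigma' hQ x n)).1
  have := h.length_le
  simp only [sigma', child, List.length_append, List.length_cons, List.length_nil]
  omega

lemma sigma'_chain (hQ : IsSacksTree Q) (x : ℕ → Bool) {m n : ℕ} (h : m ≤ n) :
    (sigma' hQ x m).1 <+: (sigma' hQ x n).1 := by
  induction n with
  | zero => simp_all
  | succ k ih =>
    rcases Nat.lt_or_ge m (k+1) with h' | h'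
    · exact (ih (by omega)).trans (sigma'_prefix hQ x k)
    · have : m = k+1 := by omega
      subst this; exact List.prefix_refl _

lemma sigma'_len_ge (hQ : IsSacksTree Q) (x : ℕ → Bool) (n : ℕ) :
    n ≤ (sigma' hQ x n).1.length := by
  induction n with
  | zero => simp
  | succ k ih => have := sigma'_len hQ x k; omega

lemma sigma'_congr (hQ : IsSacksTree Q) {x y : ℕ → Bool} (n : ℕ) (h : ∀ i < n, x i = y i) :
    sigma' hQ x n = sigma' hQ y n := by
  induction n with
  | zero => rfl
  | succ k ih =>
    have h1 := ih (fun i hi => h i (by omega))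
    simp only [sigma', h1, h k (by omega)]

def branch (hQ : IsSacksTree Q) (x : ℕ → Bool) (k : ℕ) : ℕ := (sigma' hQ x (k+1)).1.getD k 0

lemma branch_eq (hQ : IsSacksTree Q) (x : ℕ → Bool) {k n : ℕ} (h : k < n)
    (hk : k < (sigma' hQ x n).1.length) :
    branch hQ x k = (sigma' hQ x n).1[k] := by
  have hlen : k < (sigma' hQ x (k+1)).1.length :=
    lt_of_lt_of_le (by omega) (sigma'_len_ge hQ x (k+1))
  rw [branch, List.getD_eq_getElem _ _ hlen]
  exact (sigma'_chain hQ x (by omega : k+1 ≤ n)).getElem hlen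

lemma branch_mem (hQ : IsSacksTree Q) (x : ℕ → Bool) : branch hQ x ∈ treeBody Q := by
  intro n
  have hlen : n ≤ (sigma' hQ x n).1.length := sigma'_len_ge hQ x n
  have : (List.ofFn fun i : Fin n => branch hQ x i) = (sigma' hQ x n).1.take n := by
    apply List.ext_getElem
    · simp [hlen]
    · intro i h1 h2
      simp only [List.getElem_ofFn, List.getElem_take]
      exact branch_eq hQ x (by simpa using h1) (by have := (by simpa using h1 : i < n); omega)
  rw [this]
  exact hQ.1.2 _ (sigma' hQ x n).2 n

lemma branch_inj (hQ : IsSacksTree Q) : Function.Injective (branch hQ) := by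
  intro x y hxy
  by_contra hne
  have hex : ∃ n, x n ≠ y n := Function.ne_iff.mp hne
  classical
  set n := Nat.find hex with hndef
  have hn : x n ≠ y n := Nat.find_spec hex
  have hmin : ∀ i < n, x i = y i := fun i hi => by
    by_contra h'; exact Nat.find_min hex hi h'
  have hs : sigma' hQ x n = sigma' hQ y n := sigma'_congr hQ n hmin
  set t := sigma' hQ x n with ht
  set p := (nodeOf hQ t).length with hp
  have hsx : sigma' hQ x (n+1) = child hQ t (x n) := rfl
  have hsy : sigma' hQ y (n+1) = child hQ t (y n) := by
    show child hQ (sigma' hQ y n) (y n) = child hQ t (y n)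
    rw [← hs]
  have hlx : p < (sigma' hQ x (n+1)).1.length := by
    rw [hsx]; simp [child]; omega
  have hly : p < (sigma' hQ y (n+1)).1.length := by
    rw [hsy]; simp [child]; omega
  have key : ∀ (z : ℕ → Bool) (hl : p < (sigma' hQ z (n+1)).1.length),
      branch hQ z p = (sigma' hQ z (n+1)).1[p]'hl := by
    intro z hl
    have hlen : p < (sigma' hQ z (p+1)).1.length :=
      lt_of_lt_of_le (Nat.lt_succ_self p) (sigma'_len_ge hQ z (p+1))
    have hple : n + 1 ≤ p + 1 := by
      have h1 : n ≤ (t : List ℕ).length := sigma'_len_ge hQ x n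
      have h2 : (t : List ℕ).length ≤ p := by
        rw [hp]; exact (nodeOf_spec hQ t).1.length_le
      omega
    rw [branch, List.getD_eq_getElem _ _ hlen]
    exact ((sigma'_chain hQ z hple).getElem hl).symm
  have hvx : branch hQ x p = valOf hQ t (x n) := by
    rw [key x hlx]
    have : (sigma' hQ x (n+1)).1 = nodeOf hQ t ++ [valOf hQ t (x n)] := by rw [hsx]; rfl
    simp only [this]
    exact List.getElem_concat_length hp _
  have hvy : branch hQ y p = valOf hQ t (y n) := by
    rw [key y hly]
    have : (sigma' hQ y (n+1)).1 = nodeOf hQ t ++ [valOf hQ t (y n)] := by rw [hsy]; rfl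
    simp only [this]
    exact List.getElem_concat_length hp _
  have heq : valOf hQ t (x n) = valOf hQ t (y n) := by
    rw [← hvx, ← hvy, hxy]
  have hval := (nodeOf_spec hQ t).2.1
  cases hx' : x n <;> cases hy' : y n <;> rw [hx', hy'] at heq hn
  · exact hn rfl
  · exact hval heq.symm
  · exact hval heq
  · exact hn rfl

lemma sacks_body_card (hQ : IsSacksTree Q) :
    (2 : Cardinal) ^ (ℵ₀ : Cardinal) ≤ #(treeBody Q) := by
  have h1 : #(ℕ → Bool) ≤ #(treeBody Q) :=
    Cardinal.mk_le_of_injective (f := fun x => (⟨branch hQ x, branch_mem hQ x⟩ : treeBody Q))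
      (fun a b hab => branch_inj hQ (by simpa using congrArg Subtype.val hab))
  calc (2 : Cardinal) ^ (ℵ₀ : Cardinal) = #(ℕ → Bool) := by simp [Cardinal.mk_arrow]
    _ ≤ _ := h1

/-! ### The master tree P -/

def pre (x : ℕ → ℕ) (n : ℕ) : List ℕ := List.ofFn fun i : Fin n => x i

@[simp] lemma pre_length (x : ℕ → ℕ) (n : ℕ) : (pre x n).length = n := by simp [pre]

lemma pre_eq_iff {x y : ℕ → ℕ} {n : ℕ} : pre x n = pre y n ↔ ∀ i < n, x i = y i := by
  rw [pre, pre, List.ofFn_inj]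
  constructor
  · intro h i hi; exact congrFun h ⟨i, hi⟩
  · intro h; funext i; exact h i i.2

lemma pre_take (x : ℕ → ℕ) (n m : ℕ) : (pre x n).take m = pre x (min m n) := by
  apply List.ext_getElem
  · simp
  · intro i h1 h2
    simp [pre, List.getElem_take]

def enc : List ℕ → ℕ := Encodable.encode

def e (x : ℕ → ℕ) (n : ℕ) : ℕ := 4 * enc (pre x (n+1))

def Pt : Set (List ℕ) := {l | ∃ x n, l = pre (e x) n}

lemma e_congr {x y : ℕ → ℕ} {n : ℕ} (h : ∀ i ≤ n, x i = y i) : e x n = e y n := by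
  unfold e
  congr 1
  exact congrArg enc (pre_eq_iff.mpr fun i hi => h i (by omega))

lemma isTree_P : IsTree Pt := by
  constructor
  · exact ⟨[], fun n => n, 0, by simp [pre]⟩
  · rintro s ⟨x, n, rfl⟩ m
    exact ⟨x, min m n, pre_take _ _ _⟩

lemma succs_P_infinite {t : List ℕ} (ht : t ∈ Pt) : (succs Pt t).Infinite := by
  obtain ⟨x, n, rfl⟩ := ht
  refine Set.infinite_of_injective_forall_mem
    (f := fun k : ℕ => e (fun i => if i = n then k else x i) n) ?_ ?_
  · intro k k' hkk'
    have := Encodable.encode_injective (by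
      exact Nat.eq_of_mul_eq_mul_left (by norm_num) hkk' :
        enc (pre _ (n+1)) = enc (pre _ (n+1)))
    have := pre_eq_iff.mp this n (by omega)
    simpa using this
  · intro k
    refine ⟨fun i => if i = n then k else x i, n+1, ?_⟩
    apply List.ext_getElem
    · simp [pre]
    · intro i h1 h2
      simp only [pre, List.getElem_ofFn] at h2 ⊢
      rcases Nat.lt_or_ge i n with hi | hi
      · rw [List.getElem_append_left (by simpa using hi)]
        simp only [pre, List.getElem_ofFn]
        exact (e_congr (fun j hj => by simp [Nat.ne_of_lt (by omega : j < n)])).symm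
      · have : i = n := by simp [pre] at h1; omega
        subst this
        rw [List.getElem_append_right (by simp)]
        simp

lemma body_P_approx {z : ℕ → ℕ} (hz : z ∈ treeBody Pt) (n : ℕ) :
    ∃ x, ∀ i ≤ n, z i = e x i := by
  have h := hz (n+1)
  obtain ⟨x, m, hm⟩ := h
  have hm' : m = n + 1 := by
    have := congrArg List.length hm
    simp [pre] at this
    omega
  subst hm'
  refine ⟨x, fun i hi => ?_⟩
  have : pre z (n+1) = pre (e x) (n+1) := hm
  exact pre_eq_iff.mp this i (by omega)

lemma body_P_mod {z : ℕ → ℕ} (hz : z ∈ treeBody Pt) (n : ℕ) : z n % 4 = 0 := by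
  obtain ⟨x, hx⟩ := body_P_approx hz n
  rw [hx n le_rfl, e]
  simp [Nat.mul_mod_right]

lemma body_P_ed {z w : ℕ → ℕ} (hz : z ∈ treeBody Pt) (hw : w ∈ treeBody Pt)
    (hne : z ≠ w) : {n | z n = w n}.Finite := by
  by_contra hinf
  apply hne
  funext m
  have hinf' : {n | z n = w n}.Infinite := hinf
  obtain ⟨n, hn, hmn⟩ := hinf'.exists_gt m
  obtain ⟨x, hx⟩ := body_P_approx hz n
  obtain ⟨x', hx'⟩ := body_P_approx hw n
  have hzw : z n = w n := hn
  rw [hx n le_rfl, hx' n le_rfl] at hzw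
  have henc : pre x (n+1) = pre x' (n+1) :=
    Encodable.encode_injective (Nat.eq_of_mul_eq_mul_left (by norm_num) hzw)
  have hxx' : ∀ i ≤ n, x i = x' i := fun i hi => pre_eq_iff.mp henc i (by omega)
  have hmn' : m ≤ n := le_of_lt hmn
  rw [hx m hmn', hx' m hmn']
  exact e_congr (fun i hi => hxx' i (le_trans hi hmn'))

/-! ### Killers and the dominating copy -/

lemma pre_agree_finite {x y : ℕ → ℕ} (h : x ≠ y) :
    {n | pre x (n+1) = pre y (n+1)}.Finite := by
  obtain ⟨N, hN⟩ := Function.ne_iff.mp h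
  apply Set.Finite.subset (Set.finite_Iio N)
  intro n hn
  simp only [Set.mem_setOf_eq] at hn
  by_contra hlt
  simp only [Set.mem_Iio, not_lt] at hlt
  exact hN (pre_eq_iff.mp hn N (by omega))

def kk (z : ℕ → ℕ) (n : ℕ) : ℕ := if n % 2 = 0 then z n else 4 * enc (pre z (n+1)) + 1

def gg (d : ℕ → ℕ) (n : ℕ) : ℕ := 4 * Nat.pair (d n) (enc (pre d (n+1))) + 2

lemma evens_infinite : {n : ℕ | n % 2 = 0}.Infinite :=
  Set.infinite_of_injective_forall_mem (f := fun n : ℕ => 2 * n)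
    (fun a b h => by simp only at h; omega) (fun n => by simp [Nat.mul_mod_right])

lemma kk_mod_even (z : ℕ → ℕ) {n : ℕ} (h : n % 2 = 0) : kk z n = z n := by simp [kk, h]
lemma kk_mod_odd (z : ℕ → ℕ) {n : ℕ} (h : n % 2 ≠ 0) : kk z n % 4 = 1 := by
  simp only [kk, if_neg h]; omega

lemma kk_vs_body {z w : ℕ → ℕ} (hz : z ∈ treeBody Pt) (hw : w ∈ treeBody Pt) (hne : z ≠ w) :
    {n | kk z n = w n}.Finite := by
  apply Set.Finite.subset (body_P_ed hz hw hne)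
  intro n hn
  simp only [Set.mem_setOf_eq] at hn ⊢
  rcases Nat.eq_zero_or_pos (n % 2) with h | h
  · rwa [kk_mod_even z h] at hn
  · exfalso
    have h1 := kk_mod_odd z (n := n) (by omega)
    have h2 := body_P_mod hw n
    rw [hn] at h1; omega

lemma kk_agree_self (z : ℕ → ℕ) : {n | kk z n = z n}.Infinite :=
  Set.Infinite.mono (fun n hn => by simpa [Set.mem_setOf_eq] using kk_mod_even z hn)
    evens_infinite

lemma kk_ne_self {z : ℕ → ℕ} (hz : z ∈ treeBody Pt) : kk z ≠ z := by
  intro h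
  have h1 := kk_mod_odd z (n := 1) (by norm_num)
  have h2 := body_P_mod hz 1
  rw [h] at h1; omega

lemma kk_vs_kk {z z' : ℕ → ℕ} (hz : z ∈ treeBody Pt) (hz' : z' ∈ treeBody Pt) (hne : z ≠ z') :
    {n | kk z n = kk z' n}.Finite := by
  apply Set.Finite.subset ((body_P_ed hz hz' hne).union (pre_agree_finite hne))
  intro n hn
  simp only [Set.mem_setOf_eq, Set.mem_union] at hn ⊢
  rcases Nat.eq_zero_or_pos (n % 2) with h | h
  · left; rwa [kk_mod_even z h, kk_mod_even z' h] at hn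
  · right
    simp only [kk, if_neg (by omega : ¬ n % 2 = 0)] at hn
    exact Encodable.encode_injective (by omega : enc (pre z (n+1)) = enc (pre z' (n+1)))

lemma gg_mod (d : ℕ → ℕ) (n : ℕ) : gg d n % 4 = 2 := by
  simp only [gg]; omega

lemma gg_vs_body {d w : ℕ → ℕ} (hw : w ∈ treeBody Pt) : {n | gg d n = w n} = ∅ := by
  ext n; simp only [Set.mem_setOf_eq, Set.mem_empty_iff_false, iff_false]
  intro h
  have h1 := gg_mod d n
  have h2 := body_P_mod hw n
  rw [h] at h1; omega

lemma gg_vs_kk (d z : ℕ → ℕ) (hz : z ∈ treeBody Pt) : {n | gg d n = kk z n} = ∅ := by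
  ext n; simp only [Set.mem_setOf_eq, Set.mem_empty_iff_false, iff_false]
  intro h
  have h1 := gg_mod d n
  rcases Nat.eq_zero_or_pos (n % 2) with h' | h'
  · rw [kk_mod_even z h'] at h
    have h2 := body_P_mod hz n
    rw [h] at h1; omega
  · have h2 := kk_mod_odd z (n := n) (by omega)
    rw [h] at h1; omega

lemma gg_vs_gg {d d' : ℕ → ℕ} (hne : d ≠ d') : {n | gg d n = gg d' n}.Finite := by
  apply Set.Finite.subset (pre_agree_finite hne)
  intro n hn
  simp only [Set.mem_setOf_eq] at hn ⊢
  have : Nat.pair (d n) (enc (pre d (n+1))) = Nat.pair (d' n) (enc (pre d' (n+1))) := by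
    simp only [gg] at hn; omega
  exact Encodable.encode_injective (Nat.pair_eq_pair.mp this).2

lemma gg_gt (d : ℕ → ℕ) (n : ℕ) : d n < gg d n := by
  have := Nat.left_le_pair (d n) (enc (pre d (n+1)))
  simp only [gg]; omega

lemma sacks_P : IsSacksTree Pt :=
  ⟨isTree_P, fun s hs => ⟨s, hs, List.prefix_refl s, (succs_P_infinite hs).nontrivial⟩⟩
lemma miller_P : IsMillerTree Pt :=
  ⟨isTree_P, fun s hs => ⟨s, hs, List.prefix_refl s, succs_P_infinite hs⟩⟩
lemma laver_P : IsLaverTree Pt :=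
  ⟨isTree_P, [], ⟨fun i => i, 0, by simp [pre]⟩, fun t _ => Or.inl List.nil_prefix,
    fun t ht _ => succs_P_infinite ht⟩

lemma miller_sacks {T : Set (List ℕ)} (h : IsMillerTree T) : IsSacksTree T :=
  ⟨h.1, fun s hs => by
    obtain ⟨t, ht, hst, hinf⟩ := h.2 s hs
    exact ⟨t, ht, hst, hinf.nontrivial⟩⟩

lemma laver_sacks {T : Set (List ℕ)} (h : IsLaverTree T) : IsSacksTree T := by
  obtain ⟨htree, s₀, hs₀, hcomp, hsucc⟩ := h
  refine ⟨htree, fun s hs => ?_⟩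
  rcases hcomp s hs with h1 | h1
  · exact ⟨s, hs, List.prefix_refl s, (hsucc s hs h1).nontrivial⟩
  · exact ⟨s₀, hs₀, h1, (hsucc s₀ hs₀ (List.prefix_refl s₀)).nontrivial⟩

lemma treeBody_mono {T T' : Set (List ℕ)} (h : T ⊆ T') : treeBody T ⊆ treeBody T' :=
  fun _ hx n => h (hx n)

/-! ### Zorn -/

lemma exists_med {A0 : Set (ℕ → ℕ)} (h : EDFamily A0) :
    ∃ A, A0 ⊆ A ∧ MEDFamily A := by
  have hch : ∀ c ⊆ {B | EDFamily B}, IsChain (· ⊆ ·) c → c.Nonempty →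
      ∃ ub ∈ {B | EDFamily B}, ∀ s ∈ c, s ⊆ ub := by
    intro c hc hchain hne
    refine ⟨⋃₀ c, ?_, fun s hs => Set.subset_sUnion_of_mem hs⟩
    intro f hf g hg hfg
    obtain ⟨B1, hB1, hfB1⟩ := hf
    obtain ⟨B2, hB2, hgB2⟩ := hg
    rcases hchain.total hB1 hB2 with hss | hss
    · exact hc hB2 f (hss hfB1) g hgB2 hfg
    · exact hc hB1 f hfB1 g (hss hgB2) hfg
  obtain ⟨m, hsub, hmax⟩ := zorn_subset_nonempty {B | EDFamily B} hch A0 h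
  refine ⟨m, hsub, hmax.prop, ?_⟩
  intro B hAB hB
  exact hAB.not_subset (hmax.2 hB hAB.subset)

end

end S19aux

/-- there is an m.e.d. family that is s-, m- and l-nonmeasurable with a
dominating subfamily of size at most 𝔡. -/
theorem stmt19 :
    ∃ A : Set (ℕ → ℕ), MEDFamily A ∧
      ¬ TMeasurable {T | IsSacksTree T} A ∧
      ¬ TMeasurable {T | IsMillerTree T} A ∧
      ¬ TMeasurable {T | IsLaverTree T} A ∧
      ∃ D ⊆ A, IsDominating D ∧ Cardinal.mk ↑D ≤ domNumber := by
  classical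
  -- the dominating family of minimal size
  have hDomUniv : IsDominating (Set.univ : Set (ℕ → ℕ)) := by
    intro x
    exact ⟨fun n => x n + 1, Set.mem_univ _, Filter.Eventually.of_forall fun n => Nat.lt_succ_self (x n)⟩
  have hne : {c : Cardinal | ∃ D : Set (ℕ → ℕ), IsDominating D ∧ Cardinal.mk ↑D = c}.Nonempty :=
    ⟨_, Set.univ, hDomUniv, rfl⟩
  obtain ⟨D, hD, hDcard⟩ := csInf_mem hne
  -- the family of Sacks subtrees of Pt
  let S : Set (Set (List ℕ)) := {Q | IsSacksTree Q ∧ Q ⊆ S19aux.Pt}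
  -- cardinality bound
  have hcard : ∀ i : ↥S × Bool, Cardinal.mk (↥S × Bool) ≤ Cardinal.mk (treeBody i.1.1) := by
    intro i
    have h2 : (#↥S) ≤ 2 ^ (ℵ₀ : Cardinal) := by
      have h3 := Cardinal.mk_set_le S
      rwa [Cardinal.mk_set, Cardinal.mk_list_eq_aleph0] at h3
    have h1 : #(↥S × Bool) ≤ 2 ^ (ℵ₀ : Cardinal) := by
      rw [Cardinal.mk_prod, Cardinal.lift_id, Cardinal.lift_id, Cardinal.mk_bool]
      calc (#↥S) * 2 ≤ 2 ^ (ℵ₀ : Cardinal) * 2 ^ (ℵ₀ : Cardinal) := by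
            refine mul_le_mul' h2 ?_
            calc (2 : Cardinal) = 2 ^ (1 : Cardinal) := by rw [Cardinal.power_one]
              _ ≤ 2 ^ (ℵ₀ : Cardinal) :=
                  Cardinal.power_le_power_left (by norm_num) Cardinal.one_le_aleph0
        _ = 2 ^ ((ℵ₀ : Cardinal) + ℵ₀) := (Cardinal.power_add 2 ℵ₀ ℵ₀).symm
        _ = 2 ^ (ℵ₀ : Cardinal) := by rw [Cardinal.aleph0_add_aleph0]
    exact le_trans h1 (S19aux.sacks_body_card i.1.2.1)
  obtain ⟨F, hFinj, hFmem⟩ := S19aux.transversal (fun i : ↥S × Bool => treeBody i.1.1) hcard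
  let cc : ↥S → (ℕ → ℕ) := fun Q => F (Q, true)
  let yy : ↥S → (ℕ → ℕ) := fun Q => F (Q, false)
  have hccQ : ∀ Q : ↥S, cc Q ∈ treeBody Q.1 := fun Q => hFmem (Q, true)
  have hyyQ : ∀ Q : ↥S, yy Q ∈ treeBody Q.1 := fun Q => hFmem (Q, false)
  have hccP : ∀ Q : ↥S, cc Q ∈ treeBody S19aux.Pt :=
    fun Q => S19aux.treeBody_mono Q.2.2 (hccQ Q)
  have hyyP : ∀ Q : ↥S, yy Q ∈ treeBody S19aux.Pt :=
    fun Q => S19aux.treeBody_mono Q.2.2 (hyyQ Q)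
  have hcy : ∀ Q Q' : ↥S, cc Q ≠ yy Q' := by
    intro Q Q' h
    have := hFinj h
    simp at this
  -- the base family
  let A0 : Set (ℕ → ℕ) :=
    Set.range cc ∪ Set.range (fun Q => S19aux.kk (yy Q)) ∪ (S19aux.gg '' D)
  have symmfin : ∀ {a b : ℕ → ℕ}, {n | a n = b n}.Finite → {n | b n = a n}.Finite := by
    intro a b h
    have : {n | b n = a n} = {n | a n = b n} := by ext n; exact eq_comm
    rwa [this]
  have hED0 : EDFamily A0 := by
    rintro f hf g hg hfg
    rcases hf with (⟨Q1, rfl⟩ | ⟨Q1, rfl⟩) | ⟨d1, hd1, rfl⟩ <;>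
      rcases hg with (⟨Q2, rfl⟩ | ⟨Q2, rfl⟩) | ⟨d2, hd2, rfl⟩
    · exact S19aux.body_P_ed (hccP Q1) (hccP Q2) hfg
    · have hne : yy Q2 ≠ cc Q1 := fun h => hcy Q1 Q2 h.symm
      exact symmfin (S19aux.kk_vs_body (hyyP Q2) (hccP Q1) hne)
    · exact symmfin (by rw [S19aux.gg_vs_body (hccP Q1)]; exact Set.finite_empty)
    · exact S19aux.kk_vs_body (hyyP Q1) (hccP Q2) (hcy Q2 Q1).symm
    · have hne : yy Q1 ≠ yy Q2 := by
        intro h; exact hfg (congrArg S19aux.kk h)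
      exact S19aux.kk_vs_kk (hyyP Q1) (hyyP Q2) hne
    · exact symmfin (by rw [S19aux.gg_vs_kk d2 _ (hyyP Q1)]; exact Set.finite_empty)
    · rw [S19aux.gg_vs_body (hccP Q2)]; exact Set.finite_empty
    · rw [S19aux.gg_vs_kk d1 _ (hyyP Q2)]; exact Set.finite_empty
    · have hne : d1 ≠ d2 := by
        intro h; exact hfg (congrArg S19aux.gg h)
      exact S19aux.gg_vs_gg hne
  obtain ⟨A, hA0A, hAmed⟩ := S19aux.exists_med hED0
  -- non-measurability
  have key : ∀ Q : Set (List ℕ), IsSacksTree Q → Q ⊆ S19aux.Pt →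
      ¬ (treeBody Q ⊆ A ∨ treeBody Q ∩ A = ∅) := by
    intro Q hQs hQP hor
    have hQS : Q ∈ S := ⟨hQs, hQP⟩
    rcases hor with hsub | hdis
    · -- the excluded branch would be in A, contradicting the killer
      have hyA : yy ⟨Q, hQS⟩ ∈ A := hsub (hyyQ ⟨Q, hQS⟩)
      have hkA : S19aux.kk (yy ⟨Q, hQS⟩) ∈ A :=
        hA0A (Or.inl (Or.inr ⟨⟨Q, hQS⟩, rfl⟩))
      have hfin := hAmed.1 _ hkA _ hyA (S19aux.kk_ne_self (hyyP ⟨Q, hQS⟩))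
      exact (S19aux.kk_agree_self (yy ⟨Q, hQS⟩)) hfin
    · -- but the chosen branch is in the intersection
      have hcA : cc ⟨Q, hQS⟩ ∈ A := hA0A (Or.inl (Or.inl ⟨⟨Q, hQS⟩, rfl⟩))
      have : cc ⟨Q, hQS⟩ ∈ treeBody Q ∩ A := ⟨hccQ ⟨Q, hQS⟩, hcA⟩
      rw [hdis] at this
      exact this
  refine ⟨A, hAmed, ?_, ?_, ?_, ?_⟩
  · intro hmeas
    obtain ⟨Q, hQ, hQP, hor⟩ := hmeas S19aux.Pt S19aux.sacks_P
    exact key Q hQ hQP hor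
  · intro hmeas
    obtain ⟨Q, hQ, hQP, hor⟩ := hmeas S19aux.Pt S19aux.miller_P
    exact key Q (S19aux.miller_sacks hQ) hQP hor
  · intro hmeas
    obtain ⟨Q, hQ, hQP, hor⟩ := hmeas S19aux.Pt S19aux.laver_P
    exact key Q (S19aux.laver_sacks hQ) hQP hor
  · refine ⟨S19aux.gg '' D, fun f hf => hA0A (Or.inr hf), ?_, ?_⟩
    · intro x
      obtain ⟨d, hd, hev⟩ := hD x
      exact ⟨S19aux.gg d, Set.mem_image_of_mem _ hd,
        hev.mono fun n h => lt_trans h (S19aux.gg_gt d n)⟩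
    · calc Cardinal.mk ↑(S19aux.gg '' D) ≤ Cardinal.mk ↑D := Cardinal.mk_image_le
        _ = domNumber := hDcard
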